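/- Let α₂, σ > 0 and r, ρ > 1 be real numbers, set f(x) = -α₂ x^r and g(x) = σ x^ρ for x > 0, and let κ be a real number. Assume there exist q > 2 and L > 0 such that f'(x) + ((q-1)/2)|g'(x)|² ≤ L for all x > 0 (i.e., -α₂ r x^{r-1} + ((q-1)/2)σ²ρ² x^{2ρ-2} ≤ L). Then for every step size h > 0 and all x, y > 0, (x - y)·(f(𝒫_h(x)) - f(𝒫_h(y))) + ((q-1)/2)·(g(𝒫_h(x)) - g(𝒫_h(y)))² ≤ L (x - y)², where 𝒫_h(x) = min{x, h^{-κ}}. -/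

import Mathlib

open intervalIntegral MeasureTheory

lemma contOn_rpow (s : ℝ) {b a : ℝ} (hb : 0 < b) :
    ContinuousOn (fun t : ℝ => t ^ s) (Set.Icc b a) := fun t ht =>
  (Real.continuousAt_rpow_const t s (Or.inl (ne_of_gt (lt_of_lt_of_le hb ht.1)))).continuousWithinAt

lemma ftc_rpow (c p : ℝ) (hp : 1 < p) {b a : ℝ} (hb : 0 < b) (hba : b ≤ a) :
    ∫ t in b..a, c * p * t ^ (p - 1) = c * a ^ p - c * b ^ p := by
  have huIcc : Set.uIcc b a = Set.Icc b a := Set.uIcc_of_le hba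
  have hderiv : ∀ t ∈ Set.uIcc b a, HasDerivAt (fun t : ℝ => c * t ^ p) (c * p * t ^ (p - 1)) t := by
    intro t ht
    rw [huIcc] at ht
    have ht0 : t ≠ 0 := ne_of_gt (lt_of_lt_of_le hb ht.1)
    have := (Real.hasDerivAt_rpow_const (x := t) (p := p) (Or.inl ht0)).const_mul c
    rw [mul_assoc]
    exact this
  have hint : IntervalIntegrable (fun t : ℝ => c * p * t ^ (p - 1)) volume b a := by
    apply ContinuousOn.intervalIntegrable
    rw [huIcc]
    exact (continuousOn_const.mul continuousOn_const).mul (contOn_rpow _ hb)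
  exact intervalIntegral.integral_eq_sub_of_hasDerivAt hderiv hint

lemma variance_ineq {b a : ℝ} (hba : b ≤ a) (ψ : ℝ → ℝ)
    (h1 : IntervalIntegrable ψ volume b a)
    (h2 : IntervalIntegrable (fun t => ψ t ^ 2) volume b a) :
    (∫ t in b..a, ψ t) ^ 2 ≤ (a - b) * ∫ t in b..a, ψ t ^ 2 := by
  rcases eq_or_lt_of_le hba with rfl | hlt
  · simp
  · have hd : 0 < a - b := by linarith
    set I := ∫ t in b..a, ψ t with hI
    set J := ∫ t in b..a, ψ t ^ 2 with hJ
    set m := I / (a - b) with hm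
    have h0 : 0 ≤ ∫ t in b..a, (ψ t - m) ^ 2 :=
      intervalIntegral.integral_nonneg hba (fun t _ => sq_nonneg _)
    have hexp : ∫ t in b..a, (ψ t - m) ^ 2 = J - 2 * m * I + m ^ 2 * (a - b) := by
      have : ∀ t, (ψ t - m) ^ 2 = ψ t ^ 2 - (2 * m) * ψ t + m ^ 2 := by intro t; ring
      simp_rw [this]
      rw [intervalIntegral.integral_add ((h2.sub (h1.const_mul (2 * m)))) intervalIntegrable_const,
        intervalIntegral.integral_sub h2 (h1.const_mul (2 * m)),
        intervalIntegral.integral_const_mul, intervalIntegral.integral_const]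
      simp only [smul_eq_mul]
      field_simp
      ring
    rw [hexp] at h0
    have hmI : m * (a - b) = I := by rw [hm]; exact div_mul_cancel₀ I hd.ne'
    nlinarith [sq_nonneg (I - m * (a - b))]

lemma key (α₂ σ r ρ q L : ℝ) (hα₂ : 0 < α₂) (hσ : 0 < σ) (hr : 1 < r) (hρ : 1 < ρ)
    (hq1 : 0 ≤ (q - 1) / 2)
    (hmono : ∀ x : ℝ, 0 < x →
      -α₂ * r * x ^ (r - 1) + ((q - 1) / 2) * σ ^ 2 * ρ ^ 2 * x ^ (2 * ρ - 2) ≤ L)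
    {b a : ℝ} (hb : 0 < b) (hba : b ≤ a) :
    (a - b) * ((-α₂ * a ^ r) - (-α₂ * b ^ r)) + ((q - 1) / 2) * ((σ * a ^ ρ) - (σ * b ^ ρ)) ^ 2
      ≤ L * (a - b) ^ 2 := by
  have huIcc : Set.uIcc b a = Set.Icc b a := Set.uIcc_of_le hba
  set c₁ := (q - 1) / 2 with hc₁
  set φ := fun t : ℝ => -α₂ * r * t ^ (r - 1) with hφ
  set ψ := fun t : ℝ => σ * ρ * t ^ (ρ - 1) with hψ
  have hφint : IntervalIntegrable φ volume b a := by
    apply ContinuousOn.intervalIntegrable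
    rw [huIcc]
    exact continuousOn_const.mul (contOn_rpow _ hb)
  have hψint : IntervalIntegrable ψ volume b a := by
    apply ContinuousOn.intervalIntegrable
    rw [huIcc]
    exact continuousOn_const.mul (contOn_rpow _ hb)
  have hψ2int : IntervalIntegrable (fun t => ψ t ^ 2) volume b a := by
    apply ContinuousOn.intervalIntegrable
    rw [huIcc]
    exact (continuousOn_const.mul (contOn_rpow _ hb)).pow 2
  have hf : -α₂ * a ^ r - -α₂ * b ^ r = ∫ t in b..a, φ t := by
    rw [ftc_rpow (-α₂) r hr hb hba]
  have hg : σ * a ^ ρ - σ * b ^ ρ = ∫ t in b..a, ψ t := by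
    rw [ftc_rpow σ ρ hρ hb hba]
  have hCS := variance_ineq hba ψ hψint hψ2int
  -- pointwise bound: φ t + c₁ * ψ t ^ 2 ≤ L on [b,a]
  have hpt : ∀ t ∈ Set.Icc b a, φ t + c₁ * ψ t ^ 2 ≤ L := by
    intro t ht
    have ht0 : 0 < t := lt_of_lt_of_le hb ht.1
    have := hmono t ht0
    have hsq : ψ t ^ 2 = σ ^ 2 * ρ ^ 2 * t ^ (2 * ρ - 2) := by
      have : t ^ (2 * ρ - 2) = (t ^ (ρ - 1)) ^ 2 := by
        rw [← Real.rpow_natCast (t ^ (ρ - 1)) 2, ← Real.rpow_mul ht0.le]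
        norm_num
        ring_nf
      rw [hψ, this]
      ring
    rw [hφ]
    simp only []
    nlinarith [this, hsq]
  have hint_bound : ∫ t in b..a, (φ t + c₁ * ψ t ^ 2) ≤ ∫ t in b..a, (L : ℝ) := by
    apply intervalIntegral.integral_mono_on hba (hφint.add (hψ2int.const_mul c₁))
      intervalIntegrable_const
    intro t ht
    exact hpt t ht
  have hsplit : ∫ t in b..a, c₁ * ψ t ^ 2 = c₁ * ∫ t in b..a, ψ t ^ 2 :=
    intervalIntegral.integral_const_mul _ _
  rw [intervalIntegral.integral_const, smul_eq_mul,
    intervalIntegral.integral_add hφint (hψ2int.const_mul c₁), hsplit] at hint_bound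
  have hd : 0 ≤ a - b := by linarith
  rw [hf, hg]
  nlinarith [hCS, mul_le_mul_of_nonneg_left hint_bound hd]

theorem stmt_14 (α₂ σ r ρ κ q L : ℝ) (hα₂ : 0 < α₂) (hσ : 0 < σ) (hr : 1 < r) (hρ : 1 < ρ)
    (hq : 2 < q) (hL : 0 < L)
    (hmono : ∀ x : ℝ, 0 < x →
      -α₂ * r * x ^ (r - 1) + ((q - 1) / 2) * σ ^ 2 * ρ ^ 2 * x ^ (2 * ρ - 2) ≤ L) :
    ∀ h : ℝ, 0 < h → ∀ x : ℝ, 0 < x → ∀ y : ℝ, 0 < y →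
      (x - y) * ((-α₂ * (min x (h ^ (-κ))) ^ r) - (-α₂ * (min y (h ^ (-κ))) ^ r))
        + ((q - 1) / 2) * ((σ * (min x (h ^ (-κ))) ^ ρ) - (σ * (min y (h ^ (-κ))) ^ ρ)) ^ 2
        ≤ L * (x - y) ^ 2 := by
  have hq1 : 0 ≤ (q - 1) / 2 := by linarith
  -- main claim for ordered pair
  have main : ∀ c : ℝ, 0 < c → ∀ x y : ℝ, 0 < y → y ≤ x →
      (x - y) * ((-α₂ * (min x c) ^ r) - (-α₂ * (min y c) ^ r))
        + ((q - 1) / 2) * ((σ * (min x c) ^ ρ) - (σ * (min y c) ^ ρ)) ^ 2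
        ≤ L * (x - y) ^ 2 := by
    intro c hc x y hy hyx
    set b := min y c with hbdef
    set a := min x c with hadef
    have hb : 0 < b := lt_min hy hc
    have hba : b ≤ a := min_le_min hyx le_rfl
    have hlip : a - b ≤ x - y := by
      rcases le_total x c with h1 | h1 <;> rcases le_total y c with h2 | h2 <;>
        simp [hadef, hbdef, min_eq_left, min_eq_right, h1, h2] <;> linarith
    have hfmono : -α₂ * a ^ r - -α₂ * b ^ r ≤ 0 := by
      have : b ^ r ≤ a ^ r := Real.rpow_le_rpow hb.le hba (by linarith)
      nlinarith
    have hxy : 0 ≤ x - y := by linarith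
    have h1 : (x - y) * ((-α₂ * a ^ r) - (-α₂ * b ^ r))
        ≤ (a - b) * ((-α₂ * a ^ r) - (-α₂ * b ^ r)) := by
      apply mul_le_mul_of_nonpos_right _ hfmono
      linarith
    have h2 := key α₂ σ r ρ q L hα₂ hσ hr hρ hq1 hmono hb hba
    have h3 : L * (a - b) ^ 2 ≤ L * (x - y) ^ 2 := by
      apply mul_le_mul_of_nonneg_left _ hL.le
      have : 0 ≤ a - b := by linarith
      nlinarith
    linarith
  intro h hh x hx y hy
  have hc : 0 < h ^ (-κ) := Real.rpow_pos_of_pos hh _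
  rcases le_total y x with hyx | hxy
  · exact main _ hc x y hy hyx
  · have := main _ hc y x hx hxy
    nlinarith [this]
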